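/- Let M ⊆ ℤ^m be an affine monoid with facets F₁,…,F_t of cone(M), satisfying gp(M) ∩ relint(cone(M)) ⊆ M. Then M' := ⋂_{i=1}^t M_i equals the union over all faces F of cone(M) of (⋂_{F ⊆ F_i} gp(M ∩ F_i)) ∩ relint(F), with the convention that the empty intersection (for F = cone(M)) is gp(M). -/

import Mathlib

noncomputable section

/-- The canonical embedding `ℤ^m → ℝ^m`. -/
def toR {m : ℕ} (x : Fin m → ℤ) : Fin m → ℝ := fun i => (x i : ℝ)

/-- The subgroup of `ℤ^m` generated by a submonoid `M`. -/
def gp {m : ℕ} (M : AddSubmonoid (Fin m → ℤ)) : AddSubgroup (Fin m → ℤ) :=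
  AddSubgroup.closure (M : Set (Fin m → ℤ))

/-- The convex cone in `ℝ^m` generated by `M`: all nonnegative real combinations
of elements of `M`. -/
def coneM {m : ℕ} (M : AddSubmonoid (Fin m → ℤ)) : Set (Fin m → ℝ) :=
  {x | ∃ (n : ℕ) (c : Fin n → ℝ) (v : Fin n → (Fin m → ℤ)),
    (∀ i, 0 ≤ c i) ∧ (∀ i, v i ∈ M) ∧ x = ∑ i, c i • toR (v i)}

/-- Faces of `coneM M`: the cone itself, or an intersection with a supporting
hyperplane given by a linear form nonnegative on the cone. -/
def IsFace {m : ℕ} (M : AddSubmonoid (Fin m → ℤ)) (F : Set (Fin m → ℝ)) : Prop :=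
  F = coneM M ∨ ∃ α : (Fin m → ℝ) →ₗ[ℝ] ℝ,
    (∀ x ∈ coneM M, 0 ≤ α x) ∧ F = {x ∈ coneM M | α x = 0}

/-- A facet: a maximal proper face. -/
def IsFacet {m : ℕ} (M : AddSubmonoid (Fin m → ℤ)) (F : Set (Fin m → ℝ)) : Prop :=
  IsFace M F ∧ F ≠ coneM M ∧ ∀ G, IsFace M G → F ⊆ G → G = F ∨ G = coneM M

/-- The subgroup `gp(M ∩ F)` of `ℤ^m` generated by the elements of `M` lying
in the face `F`. -/
def gpF {m : ℕ} (M : AddSubmonoid (Fin m → ℤ)) (F : Set (Fin m → ℝ)) :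
    AddSubgroup (Fin m → ℤ) :=
  AddSubgroup.closure {a : Fin m → ℤ | a ∈ M ∧ toR a ∈ F}

/-- `M` is seminormal: `z ∈ gp(M)`, `2z ∈ M`, `3z ∈ M` imply `z ∈ M`. -/
def Seminormal {m : ℕ} (M : AddSubmonoid (Fin m → ℤ)) : Prop :=
  ∀ z ∈ gp M, 2 • z ∈ M → 3 • z ∈ M → z ∈ M

/-- `M` is normal: `z ∈ gp(M)`, `kz ∈ M` for some `k ≥ 1` imply `z ∈ M`. -/
def IsNormal {m : ℕ} (M : AddSubmonoid (Fin m → ℤ)) : Prop :=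
  ∀ z ∈ gp M, (∃ k : ℕ, 0 < k ∧ k • z ∈ M) → z ∈ M

/-- `M` is positive: `0` is the only invertible element. -/
def Positive {m : ℕ} (M : AddSubmonoid (Fin m → ℤ)) : Prop :=
  ∀ a ∈ M, -a ∈ M → a = 0

/-- The localization monoid `M_F` of `M` at a face `F`:
elements `a ∈ gp(M)` with `a + b ∈ M` for some `b ∈ M ∩ F`. -/
def locM {m : ℕ} (M : AddSubmonoid (Fin m → ℤ)) (F : Set (Fin m → ℝ)) :
    Set (Fin m → ℤ) :=
  {a | a ∈ gp M ∧ ∃ b, b ∈ M ∧ toR b ∈ F ∧ a + b ∈ M}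

namespace Aux

variable {m : ℕ}

theorem toR_add (x y : Fin m → ℤ) : toR (x + y) = toR x + toR y := by
  funext i; simp [toR]

theorem toR_zero : toR (0 : Fin m → ℤ) = 0 := by funext i; simp [toR]

theorem toR_sub (x y : Fin m → ℤ) : toR (x - y) = toR x - toR y := by
  funext i; simp [toR]

theorem toR_nsmul (k : ℕ) (x : Fin m → ℤ) : toR (k • x) = (k : ℝ) • toR x := by
  funext i; simp [toR]

theorem toR_sum (s : Finset (Fin m → ℤ)) (f : (Fin m → ℤ) → (Fin m → ℤ)) :
    toR (∑ g ∈ s, f g) = ∑ g ∈ s, toR (f g) := by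
  classical
  induction s using Finset.induction with
  | empty => simp [toR_zero]
  | insert _ _ h ih => rw [Finset.sum_insert h, Finset.sum_insert h, toR_add, ih]

variable (M : AddSubmonoid (Fin m → ℤ))

theorem mem_coneM {a : Fin m → ℤ} (ha : a ∈ M) : toR a ∈ coneM M :=
  ⟨1, fun _ => 1, fun _ => a, fun _ => zero_le_one, fun _ => ha, by simp⟩

theorem coneM_zero : (0 : Fin m → ℝ) ∈ coneM M :=
  ⟨0, fun i => 0, fun i => 0, fun i => le_rfl, fun i => M.zero_mem, by simp⟩

theorem coneM_add {x y : Fin m → ℝ} (hx : x ∈ coneM M) (hy : y ∈ coneM M) :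
    x + y ∈ coneM M := by
  obtain ⟨n₁, c₁, v₁, hc₁, hv₁, rfl⟩ := hx
  obtain ⟨n₂, c₂, v₂, hc₂, hv₂, rfl⟩ := hy
  refine ⟨n₁ + n₂, Fin.append c₁ c₂, Fin.append v₁ v₂, ?_, ?_, ?_⟩
  · intro i
    cases i using Fin.addCases with
    | left i => simpa using hc₁ i
    | right i => simpa using hc₂ i
  · intro i
    cases i using Fin.addCases with
    | left i => simpa using hv₁ i
    | right i => simpa using hv₂ i
  · rw [Fin.sum_univ_add]
    congr 1 <;> (apply Finset.sum_congr rfl; intro i _; simp)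

theorem coneM_smul {c : ℝ} (hc : 0 ≤ c) {x : Fin m → ℝ} (hx : x ∈ coneM M) :
    c • x ∈ coneM M := by
  obtain ⟨n, d, v, hd, hv, rfl⟩ := hx
  exact ⟨n, fun i => c * d i, v, fun i => mul_nonneg hc (hd i),
    hv, by rw [Finset.smul_sum]; simp [smul_smul]⟩

theorem mem_rep {s : Finset (Fin m → ℤ)} {a : Fin m → ℤ}
    (ha : a ∈ AddSubmonoid.closure (s : Set (Fin m → ℤ))) :
    ∃ n : (Fin m → ℤ) → ℕ, a = ∑ g ∈ s, n g • g := by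
  classical
  induction ha using AddSubmonoid.closure_induction with
  | mem g hg =>
    refine ⟨fun h => if h = g then 1 else 0, ?_⟩
    rw [Finset.sum_eq_single g]
    · simp
    · intro h _ hne; simp [hne]
    · intro hgs; exact absurd hg hgs
  | zero => exact ⟨0, by simp⟩
  | add x y hx hy ihx ihy =>
    obtain ⟨n₁, rfl⟩ := ihx
    obtain ⟨n₂, rfl⟩ := ihy
    exact ⟨n₁ + n₂, by rw [← Finset.sum_add_distrib]; simp [add_smul]⟩

theorem memC_iff {s : Finset (Fin m → ℤ)} (hs : AddSubmonoid.closure (s : Set (Fin m → ℤ)) = M)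
    (x : Fin m → ℝ) :
    x ∈ coneM M ↔ ∃ c : (Fin m → ℤ) → ℝ, (∀ g ∈ s, 0 ≤ c g) ∧ x = ∑ g ∈ s, c g • toR g := by
  classical
  constructor
  · rintro ⟨n, c, v, hc, hv, rfl⟩
    have hrep : ∀ i, ∃ nn : (Fin m → ℤ) → ℕ, v i = ∑ g ∈ s, nn g • g := by
      intro i; exact mem_rep (by rw [hs]; exact hv i)
    choose N hN using hrep
    refine ⟨fun g => ∑ i, c i * (N i g : ℝ), fun g _ => Finset.sum_nonneg fun i _ =>
      mul_nonneg (hc i) (Nat.cast_nonneg _), ?_⟩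
    have : ∀ i, c i • toR (v i) = ∑ g ∈ s, (c i * (N i g : ℝ)) • toR g := by
      intro i
      rw [hN i, toR_sum, Finset.smul_sum]
      exact Finset.sum_congr rfl fun g _ => by rw [toR_nsmul, smul_smul]
    simp only [this]
    rw [Finset.sum_comm]
    exact Finset.sum_congr rfl fun g _ => by rw [Finset.sum_smul]
  · rintro ⟨c, hc, rfl⟩
    apply Finset.sum_induction _ (· ∈ coneM M) (fun a b => coneM_add M) (coneM_zero M)
    intro g hg
    exact coneM_smul M (hc g hg) (mem_coneM M (by rw [← hs]; exact AddSubmonoid.subset_closure hg))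

theorem coneM_convex : Convex ℝ (coneM M) := by
  intro x hx y hy a b ha hb _
  exact coneM_add M (coneM_smul M ha hx) (coneM_smul M hb hy)

/-- Differences characterization of subgroup closure of an additively closed set with 0. -/
theorem mem_group_closure_iff {P : Set (Fin m → ℤ)} (h0 : (0 : Fin m → ℤ) ∈ P)
    (hadd : ∀ x ∈ P, ∀ y ∈ P, x + y ∈ P) {a : Fin m → ℤ} :
    a ∈ AddSubgroup.closure P ↔ ∃ u ∈ P, ∃ v ∈ P, a = u - v := by
  constructor
  · intro ha
    induction ha using AddSubgroup.closure_induction with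
    | mem g hg => exact ⟨g, hg, 0, h0, by simp⟩
    | zero => exact ⟨0, h0, 0, h0, by simp⟩
    | add x y hx hy ihx ihy =>
      obtain ⟨u₁, hu₁, v₁, hv₁, rfl⟩ := ihx
      obtain ⟨u₂, hu₂, v₂, hv₂, rfl⟩ := ihy
      exact ⟨u₁ + u₂, hadd _ hu₁ _ hu₂, v₁ + v₂, hadd _ hv₁ _ hv₂, by abel⟩
    | neg x hx ihx =>
      obtain ⟨u, hu, v, hv, rfl⟩ := ihx
      exact ⟨v, hv, u, hu, by abel⟩
  · rintro ⟨u, hu, v, hv, rfl⟩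
    exact sub_mem (AddSubgroup.subset_closure hu) (AddSubgroup.subset_closure hv)

/-- The standard linear combination map. -/
def combMap {ι : Type} [Fintype ι] (g : ι → (Fin m → ℝ)) : (ι → ℝ) →ₗ[ℝ] (Fin m → ℝ) :=
  Fintype.linearCombination ℝ g

theorem combMap_apply {ι : Type} [Fintype ι] (g : ι → (Fin m → ℝ)) (d : ι → ℝ) :
    combMap g d = ∑ k, d k • g k := Fintype.linearCombination_apply ℝ g d

theorem range_combMap {ι : Type} [Fintype ι] (g : ι → (Fin m → ℝ)) :
    LinearMap.range (combMap g) = Submodule.span ℝ (Set.range g) := by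
  classical
  apply le_antisymm
  · rintro x ⟨d, rfl⟩
    exact Submodule.sum_mem _ fun k _ => Submodule.smul_mem _ _
      (Submodule.subset_span (Set.mem_range_self k))
  · rw [Submodule.span_le]
    rintro x ⟨k, rfl⟩
    exact ⟨Pi.single k 1, by simp [combMap]⟩

/-- The sum of generators is an "interior point" of the cone they generate,
relative to their span. -/
theorem interior_point {ι : Type} [Fintype ι] (g : ι → (Fin m → ℝ)) :
    ∃ ε > (0:ℝ), ∀ y ∈ Submodule.span ℝ (Set.range g), ‖y - ∑ k, g k‖ < ε →
      ∃ d : ι → ℝ, (∀ k, 0 < d k) ∧ y = ∑ k, d k • g k := by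
  classical
  set W := Submodule.span ℝ (Set.range g)
  have hmem : ∀ d : ι → ℝ, combMap g d ∈ W := by
    intro d; show _ ∈ Submodule.span ℝ (Set.range g); rw [← range_combMap g]; exact ⟨d, rfl⟩
  let ψ : (ι → ℝ) →ₗ[ℝ] W := (combMap g).codRestrict W hmem
  have hsurj : Function.Surjective ψ := by
    rintro ⟨x, hx⟩
    have hx' : x ∈ LinearMap.range (combMap g) := by rw [range_combMap g]; exact hx
    obtain ⟨d, rfl⟩ := hx'
    exact ⟨d, rfl⟩
  have hsum : (∑ k, g k) ∈ W := by simpa [combMap_apply] using hmem (fun _ => 1)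
  let ψL : (ι → ℝ) →L[ℝ] W := LinearMap.toContinuousLinearMap ψ
  have hopen : IsOpenMap ψL := ContinuousLinearMap.isOpenMap ψL hsurj
  have h1 : IsOpen (ψL '' Metric.ball (fun _ => (1:ℝ)) 1) := hopen _ Metric.isOpen_ball
  have hc : (ψL (fun _ => 1) : W) ∈ ψL '' Metric.ball (fun _ => (1:ℝ)) 1 :=
    ⟨_, Metric.mem_ball_self one_pos, rfl⟩
  obtain ⟨ε, hε, hball⟩ := Metric.isOpen_iff.1 h1 _ hc
  refine ⟨ε, hε, fun y hy hnorm => ?_⟩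
  have hyW : (⟨y, hy⟩ : W) ∈ Metric.ball (ψL (fun _ => 1)) ε := by
    rw [Metric.mem_ball]
    have : ψL (fun _ => (1:ℝ)) = ⟨∑ k, g k, hsum⟩ := by
      apply Subtype.ext
      simp [ψL, ψ, combMap_apply]
    rw [this, Subtype.dist_eq]
    simpa [dist_eq_norm] using hnorm
  obtain ⟨d, hd, hdy⟩ := hball hyW
  refine ⟨d, fun k => ?_, ?_⟩
  · have := norm_le_pi_norm (d - fun _ => (1:ℝ)) k
    rw [Metric.mem_ball, dist_eq_norm] at hd
    have h2 : |d k - 1| < 1 := lt_of_le_of_lt (by simpa using this) hd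
    have := abs_lt.1 h2
    linarith [this.1]
  · have : (ψL d : Fin m → ℝ) = y := by rw [hdy]
    rw [← this]
    rfl

/-- The cone generated by a finite set of integer vectors. -/
def K (T : Finset (Fin m → ℤ)) : Set (Fin m → ℝ) :=
  {x | ∃ c : (Fin m → ℤ) → ℝ, (∀ g ∈ T, 0 ≤ c g) ∧ x = ∑ g ∈ T, c g • toR g}

theorem K_mono {T T' : Finset (Fin m → ℤ)} (h : T ⊆ T') : K T ⊆ K T' := by
  classical
  rintro x ⟨c, hc, rfl⟩
  refine ⟨fun g => if g ∈ T then c g else 0, fun g _ => ?_, ?_⟩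
  · by_cases hgT : g ∈ T
    · simpa [hgT] using hc g hgT
    · simp [hgT]
  · rw [← Finset.sum_subset h]
    · exact Finset.sum_congr rfl fun g hg => by simp [hg]
    · intro g _ hg; simp [hg]

theorem coneM_eq_K {s : Finset (Fin m → ℤ)}
    (hs : AddSubmonoid.closure (s : Set (Fin m → ℤ)) = M) : coneM M = K s := by
  ext x; exact memC_iff M hs x

theorem mem_K_attach {T : Finset (Fin m → ℤ)} {x : Fin m → ℝ} :
    x ∈ K T ↔ ∃ c : {g // g ∈ T} → ℝ, (∀ k, 0 ≤ c k) ∧ x = ∑ k, c k • toR k.1 := by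
  classical
  constructor
  · rintro ⟨c, hc, rfl⟩
    refine ⟨fun k => c k.1, fun k => hc k.1 k.2, ?_⟩
    rw [Finset.sum_coe_sort T (fun g => c g • toR g)]
  · rintro ⟨c, hc, rfl⟩
    refine ⟨fun g => if hg : g ∈ T then c ⟨g, hg⟩ else 0, fun g hg => by simp [hg, hc], ?_⟩
    rw [← Finset.sum_coe_sort T (fun g => (if hg : g ∈ T then c ⟨g, hg⟩ else 0) • toR g)]
    exact Finset.sum_congr rfl fun k _ => by simp [k.2]

theorem carath (T : Finset (Fin m → ℤ)) {x : Fin m → ℝ} (hx : x ∈ K T) :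
    ∃ T' : Finset (Fin m → ℤ), T' ⊆ T ∧
      LinearIndependent ℝ (fun g : {g // g ∈ T'} => toR g.1) ∧ x ∈ K T' := by
  classical
  induction T using Finset.strongInduction with
  | _ T ih =>
  by_cases hind : LinearIndependent ℝ (fun g : {g // g ∈ T} => toR g.1)
  · exact ⟨T, Finset.Subset.refl T, hind, hx⟩
  · obtain ⟨e, he0, k₀, hk₀⟩ := Fintype.not_linearIndependent_iff.1 hind
    -- turn e into a full-type function E with a positive value somewhere
    have key : ∀ E : (Fin m → ℤ) → ℝ, (∑ g ∈ T, E g • toR g = 0) →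
        (∃ g₀ ∈ T, 0 < E g₀) →
        ∃ T' : Finset (Fin m → ℤ), T' ⊆ T ∧
          LinearIndependent ℝ (fun g : {g // g ∈ T'} => toR g.1) ∧ x ∈ K T' := by
      intro E hE0 ⟨g₀, hg₀T, hg₀⟩
      obtain ⟨c, hc, rfl⟩ := hx
      have hPne : (T.filter (fun g => 0 < E g)).Nonempty :=
        ⟨g₀, Finset.mem_filter.2 ⟨hg₀T, hg₀⟩⟩
      obtain ⟨g₁, hg₁P, hg₁min⟩ :=
        Finset.exists_min_image (T.filter (fun g => 0 < E g)) (fun g => c g / E g) hPne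
      obtain ⟨hg₁T, hg₁pos⟩ := Finset.mem_filter.1 hg₁P
      set r := c g₁ / E g₁ with hr
      have hr0 : 0 ≤ r := div_nonneg (hc g₁ hg₁T) hg₁pos.le
      have hc' : ∀ g ∈ T, 0 ≤ c g - r * E g := by
        intro g hg
        by_cases hEg : 0 < E g
        · have h1 := hg₁min g (Finset.mem_filter.2 ⟨hg, hEg⟩)
          rw [hr, div_le_div_iff₀ hg₁pos hEg] at h1
          have h2 : r * E g ≤ c g := by
            rw [hr, div_mul_eq_mul_div, div_le_iff₀ hg₁pos]; linarith
          linarith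
        · push_neg at hEg
          nlinarith [hc g hg, mul_nonneg hr0 (neg_nonneg.2 hEg)]
      have hxeq : ∑ g ∈ T, c g • toR g = ∑ g ∈ T, (c g - r * E g) • toR g := by
        simp only [sub_smul, Finset.sum_sub_distrib, mul_smul]
        rw [← Finset.smul_sum, hE0, smul_zero, sub_zero]
      have hg₁zero : c g₁ - r * E g₁ = 0 := by
        rw [hr]; field_simp; ring
      have hxK : (∑ g ∈ T, c g • toR g) ∈ K (T.erase g₁) := by
        refine ⟨fun g => c g - r * E g, fun g hg => hc' g (Finset.mem_of_mem_erase hg), ?_⟩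
        rw [hxeq, ← Finset.add_sum_erase T _ hg₁T, hg₁zero, zero_smul, zero_add]
      obtain ⟨T', hT'sub, hT'ind, hT'mem⟩ := ih (T.erase g₁) (Finset.erase_ssubset hg₁T) hxK
      exact ⟨T', hT'sub.trans (Finset.erase_subset g₁ T), hT'ind, hT'mem⟩
    have hE0 : ∀ e' : {g // g ∈ T} → ℝ, (∑ k, e' k • toR k.1 = 0) →
        ∑ g ∈ T, (fun g => if hg : g ∈ T then e' ⟨g, hg⟩ else 0) g • toR g = 0 := by
      intro e' he'
      rw [← Finset.sum_coe_sort T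
        (fun g => (if hg : g ∈ T then e' ⟨g, hg⟩ else 0) • toR g)]
      rw [← he']
      exact Finset.sum_congr rfl fun k _ => by simp [k.2]
    rcases lt_trichotomy (e k₀) 0 with hneg | hzero | hpos
    · have hnege : ∑ k : {g // g ∈ T}, (-e) k • toR k.1 = 0 := by
        have h := congrArg (fun z : Fin m → ℝ => -z) he0
        simp only [neg_zero] at h
        rw [← h, ← Finset.sum_neg_distrib]
        exact Finset.sum_congr rfl fun k _ => by simp
      refine key (fun g => if hg : g ∈ T then (-e) ⟨g, hg⟩ else 0) (hE0 (-e) hnege) ?_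
      refine ⟨k₀.1, k₀.2, ?_⟩
      simp only [k₀.2, dif_pos, Pi.neg_apply, Subtype.coe_eta]
      linarith
    · exact absurd hzero hk₀
    · refine key (fun g => if hg : g ∈ T then e ⟨g, hg⟩ else 0) (hE0 e he0) ?_
      exact ⟨k₀.1, k₀.2, by simp [k₀.2, hpos]⟩

theorem isClosed_K_of_indep {T : Finset (Fin m → ℤ)}
    (hind : LinearIndependent ℝ (fun g : {g // g ∈ T} => toR g.1)) : IsClosed (K T) := by
  classical
  set φ : ({g // g ∈ T} → ℝ) →ₗ[ℝ] (Fin m → ℝ) := combMap (fun g : {g // g ∈ T} => toR g.1)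
  have hinj : Function.Injective φ := by
    rw [← LinearMap.ker_eq_bot]
    rw [Fintype.linearIndependent_iff] at hind
    rw [LinearMap.ker_eq_bot']
    intro c hc
    funext k
    exact hind c hc k
  have hce := LinearMap.isClosedEmbedding_of_injective (f := φ) (by rwa [LinearMap.ker_eq_bot])
  have hKeq : K T = φ '' {c | ∀ k, 0 ≤ c k} := by
    ext x
    rw [mem_K_attach]
    constructor
    · rintro ⟨c, hc, rfl⟩; exact ⟨c, hc, rfl⟩
    · rintro ⟨c, hc, rfl⟩; exact ⟨c, hc, rfl⟩
  rw [hKeq]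
  apply hce.isClosedMap _
  have : {c : {g // g ∈ T} → ℝ | ∀ k, 0 ≤ c k} = ⋂ k, {c | 0 ≤ c k} := by
    ext c; simp [Set.mem_iInter]
  rw [this]
  exact isClosed_iInter fun k => isClosed_le continuous_const (continuous_apply k)

theorem isClosed_coneM {s : Finset (Fin m → ℤ)}
    (hs : AddSubmonoid.closure (s : Set (Fin m → ℤ)) = M) : IsClosed (coneM M) := by
  classical
  have : coneM M = ⋃ T ∈ {T : Finset (Fin m → ℤ) | T ⊆ s ∧
      LinearIndependent ℝ (fun g : {g // g ∈ T} => toR g.1)}, K T := by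
    ext x
    simp only [Set.mem_iUnion, Set.mem_setOf_eq]
    constructor
    · intro hx
      rw [coneM_eq_K M hs] at hx
      obtain ⟨T', hsub, hind, hmem⟩ := carath s hx
      exact ⟨T', ⟨hsub, hind⟩, hmem⟩
    · rintro ⟨T, ⟨hsub, _⟩, hmem⟩
      rw [coneM_eq_K M hs]
      exact K_mono hsub hmem
  rw [this]
  apply Set.Finite.isClosed_biUnion
  · apply Set.Finite.subset (s.powerset : Finset _).finite_toSet
    intro T hT
    simpa [Finset.mem_powerset] using hT.1
  · intro T hT
    exact isClosed_K_of_indep hT.2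

/-- The real span of the generators. -/
def LL (s : Finset (Fin m → ℤ)) : Submodule ℝ (Fin m → ℝ) :=
  Submodule.span ℝ (toR '' (s : Set (Fin m → ℤ)))

theorem LL_eq_span_range (s : Finset (Fin m → ℤ)) :
    LL s = Submodule.span ℝ (Set.range (fun g : {g // g ∈ s} => toR g.1)) := by
  unfold LL
  congr 1
  ext x
  constructor
  · rintro ⟨g, hg, rfl⟩; exact ⟨⟨g, hg⟩, rfl⟩
  · rintro ⟨⟨g, hg⟩, rfl⟩; exact ⟨g, hg, rfl⟩

theorem toR_mem_LL_of_K {s T : Finset (Fin m → ℤ)} (hT : T ⊆ s) {x : Fin m → ℝ}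
    (hx : x ∈ K T) : x ∈ LL s := by
  obtain ⟨c, hc, rfl⟩ := hx
  exact Submodule.sum_mem _ fun g hg => Submodule.smul_mem _ _
    (Submodule.subset_span ⟨g, hT hg, rfl⟩)

theorem coneM_subset_LL {s : Finset (Fin m → ℤ)}
    (hs : AddSubmonoid.closure (s : Set (Fin m → ℤ)) = M) :
    coneM M ⊆ (LL s : Set (Fin m → ℝ)) := by
  intro x hx
  rw [coneM_eq_K M hs] at hx
  exact toR_mem_LL_of_K (Finset.Subset.refl s) hx

theorem toR_mem_LL_of_memM {s : Finset (Fin m → ℤ)}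
    (hs : AddSubmonoid.closure (s : Set (Fin m → ℤ)) = M) {a : Fin m → ℤ} (ha : a ∈ M) :
    toR a ∈ LL s :=
  coneM_subset_LL M hs (mem_coneM M ha)

theorem toR_mem_LL_of_gp {s : Finset (Fin m → ℤ)}
    (hs : AddSubmonoid.closure (s : Set (Fin m → ℤ)) = M) {a : Fin m → ℤ} (ha : a ∈ gp M) :
    toR a ∈ LL s := by
  induction ha using AddSubgroup.closure_induction with
  | mem g hg => exact toR_mem_LL_of_memM M hs hg
  | zero => rw [toR_zero]; exact Submodule.zero_mem _
  | add x y hx hy ihx ihy => rw [toR_add]; exact Submodule.add_mem _ ihx ihy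
  | neg x hx ihx =>
    have : toR (-x) = -toR x := by funext i; simp [toR]
    rw [this]; exact Submodule.neg_mem _ ihx

theorem face_subset {G : Set (Fin m → ℝ)} (hG : IsFace M G) : G ⊆ coneM M := by
  rcases hG with rfl | ⟨β, hβ, rfl⟩
  · exact Set.Subset.refl _
  · exact Set.sep_subset _ _

theorem face_rep {s : Finset (Fin m → ℤ)}
    (hs : AddSubmonoid.closure (s : Set (Fin m → ℤ)) = M) {G : Set (Fin m → ℝ)}
    (hG : IsFace M G) (p : (Fin m → ℤ) → Prop) [DecidablePred p]
    (hp : ∀ g, p g ↔ toR g ∈ G) :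
    G = K (s.filter p) := by
  rcases hG with rfl | ⟨β, hβ, rfl⟩
  · rw [Finset.filter_true_of_mem fun g hg => (hp g).2 (mem_coneM M ?_), coneM_eq_K M hs]
    rw [← hs]
    exact AddSubmonoid.subset_closure hg
  · apply Set.eq_of_subset_of_subset
    · rintro x ⟨hxC, hxβ⟩
      rw [coneM_eq_K M hs] at hxC
      obtain ⟨c, hc, rfl⟩ := hxC
      have hterm : ∀ g ∈ s, 0 ≤ c g * β (toR g) := fun g hg =>
        mul_nonneg (hc g hg) (hβ _ (mem_coneM M (by rw [← hs]; exact AddSubmonoid.subset_closure hg)))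
      have hβsum : ∑ g ∈ s, c g * β (toR g) = 0 := by
        rw [← hxβ, map_sum]
        exact Finset.sum_congr rfl fun g _ => by rw [map_smul]; simp
      have hzero := (Finset.sum_eq_zero_iff_of_nonneg hterm).1 hβsum
      refine ⟨c, fun g hg => hc g (Finset.mem_of_mem_filter g hg), ?_⟩
      refine (Finset.sum_subset (Finset.filter_subset p s) ?_).symm
      intro g hgs hgf
      by_cases hcg : c g = 0
      · simp [hcg]
      · exfalso
        apply hgf
        rw [Finset.mem_filter]
        have hβg : β (toR g) = 0 := by
          rcases mul_eq_zero.1 (hzero g hgs) with h | h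
          · exact absurd h hcg
          · exact h
        exact ⟨hgs, (hp g).2
          ⟨mem_coneM M (by rw [← hs]; exact AddSubmonoid.subset_closure hgs), hβg⟩⟩
    · intro x hx
      have hxC : x ∈ coneM M := by
        rw [coneM_eq_K M hs]
        exact K_mono (Finset.filter_subset _ s) hx
      obtain ⟨c, hc, rfl⟩ := hx
      refine ⟨hxC, ?_⟩
      rw [map_sum, Finset.sum_eq_zero]
      intro g hg
      have : β (toR g) = 0 := ((hp g).1 (Finset.mem_filter.1 hg).2).2
      rw [map_smul]
      simp [this]

theorem faces_finite {s : Finset (Fin m → ℤ)}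
    (hs : AddSubmonoid.closure (s : Set (Fin m → ℤ)) = M) :
    {G : Set (Fin m → ℝ) | IsFace M G}.Finite := by
  classical
  apply Set.Finite.subset (Set.Finite.image K (s.powerset : Finset (Finset (Fin m → ℤ))).finite_toSet)
  intro G hG
  refine ⟨Finset.filter (fun g => toR g ∈ G) s, ?_, ?_⟩
  · exact Finset.mem_coe.2 (Finset.mem_powerset.2 (Finset.filter_subset _ s))
  · exact (face_rep M hs hG _ (fun g => Iff.rfl)).symm

theorem facet_of_proper {s : Finset (Fin m → ℤ)}
    (hs : AddSubmonoid.closure (s : Set (Fin m → ℤ)) = M) {H : Set (Fin m → ℝ)}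
    (hH : IsFace M H) (hHne : H ≠ coneM M) :
    ∃ G, IsFacet M G ∧ H ⊆ G := by
  classical
  set 𝒬 := {G : Set (Fin m → ℝ) | IsFace M G ∧ G ≠ coneM M ∧ H ⊆ G}
  have h𝒬fin : 𝒬.Finite := (faces_finite M hs).subset fun G hG => hG.1
  have h𝒬ne : 𝒬.Nonempty := ⟨H, hH, hHne, Set.Subset.refl H⟩
  obtain ⟨G, hG𝒬, hGmax⟩ := Set.Finite.exists_maximalFor id 𝒬 h𝒬fin h𝒬ne
  refine ⟨G, ⟨hG𝒬.1, hG𝒬.2.1, ?_⟩, hG𝒬.2.2⟩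
  intro G' hG' hGG'
  by_cases hG'C : G' = coneM M
  · exact Or.inr hG'C
  · left
    exact Set.Subset.antisymm (hGmax ⟨hG', hG'C, hG𝒬.2.2.trans hGG'⟩ hGG') hGG'

set_option maxHeartbeats 1600000 in
theorem farkas {s : Finset (Fin m → ℤ)}
    (hs : AddSubmonoid.closure (s : Set (Fin m → ℤ)) = M)
    {t : ℕ} (F : Fin t → Set (Fin m → ℝ)) (α : Fin t → ((Fin m → ℝ) →ₗ[ℝ] ℝ))
    (hα : ∀ i, ∀ x ∈ coneM M, 0 ≤ α i x)
    (hFdef : ∀ i, F i = {x ∈ coneM M | α i x = 0})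
    (hfacets : ∀ G : Set (Fin m → ℝ), IsFacet M G ↔ ∃ i, G = F i)
    {x : Fin m → ℝ} (hxL : x ∈ LL s) (hxα : ∀ i, 0 ≤ α i x) : x ∈ coneM M := by
  classical
  by_contra hxC
  -- the interior point c
  set c : Fin m → ℝ := ∑ g ∈ s, toR g with hc_def
  have hgC : ∀ g ∈ s, toR g ∈ coneM M := fun g hg =>
    mem_coneM M (by rw [← hs]; exact AddSubmonoid.subset_closure hg)
  have hcC : c ∈ coneM M := by
    rw [coneM_eq_K M hs]
    exact ⟨fun _ => 1, fun g _ => zero_le_one, by simp [hc_def]⟩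
  have hcL : c ∈ LL s :=
    Submodule.sum_mem _ fun g hg => Submodule.subset_span ⟨g, hg, rfl⟩
  obtain ⟨ε, hε, hball⟩ := interior_point (fun k : {g // g ∈ s} => toR k.1)
  have hcsum : ∑ k : {g // g ∈ s}, toR k.1 = c := Finset.sum_coe_sort s (fun g => toR g)
  set csub : ↥(LL s) := ⟨c, hcL⟩ with hcsub_def
  set P : Set ↥(LL s) := (Subtype.val ⁻¹' coneM M) with hP_def
  have hPconv : Convex ℝ P := Convex.linear_preimage (f := (LL s).subtype) (coneM_convex M)
  have hcO : csub ∈ interior P := by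
    rw [mem_interior]
    refine ⟨Metric.ball csub ε, ?_, Metric.isOpen_ball, Metric.mem_ball_self hε⟩
    intro z hz
    have hzL : (z : Fin m → ℝ) ∈ Submodule.span ℝ
        (Set.range (fun k : {g // g ∈ s} => toR k.1)) := by
      rw [← LL_eq_span_range]; exact z.2
    have hdist : ‖(z : Fin m → ℝ) - c‖ < ε := by
      have := hz
      rw [Metric.mem_ball, Subtype.dist_eq, dist_eq_norm] at this
      exact this
    obtain ⟨d, hd, hdz⟩ := hball (z : Fin m → ℝ) hzL (by rwa [hcsum])
    show (z : Fin m → ℝ) ∈ coneM M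
    rw [coneM_eq_K M hs]
    exact mem_K_attach.2 ⟨d, fun k => (hd k).le, hdz⟩
  -- the segment
  set pt : ℝ → (Fin m → ℝ) := fun u => (1 - u) • c + u • x with hpt_def
  have hptL : ∀ u, pt u ∈ LL s := fun u =>
    Submodule.add_mem _ (Submodule.smul_mem _ _ hcL) (Submodule.smul_mem _ _ hxL)
  have hptcont : Continuous pt := by fun_prop
  set S : Set ℝ := {u | 0 ≤ u ∧ pt u ∈ coneM M} with hS_def
  have hS0 : (0 : ℝ) ∈ S := ⟨le_rfl, by simpa [hpt_def] using hcC⟩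
  have hpt1 : pt 1 = x := by simp [hpt_def]
  have hSb : ∀ u ∈ S, u ≤ 1 := by
    intro u hu
    by_contra hgt
    push_neg at hgt
    apply hxC
    have hu0 : u ≠ 0 := by linarith
    have h1 : ((u - 1)/u) • c + (1/u) • pt u = x := by
      simp only [hpt_def]
      match_scalars
      · field_simp; ring
      · field_simp
    rw [← h1]
    exact coneM_convex M hcC hu.2
      (div_nonneg (by linarith) (by linarith)) (by positivity)
      (by field_simp; ring)
  have hSclosed : IsClosed S := by
    have : S = {u : ℝ | 0 ≤ u} ∩ pt ⁻¹' (coneM M) := rfl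
    rw [this]
    exact (isClosed_le continuous_const continuous_id).inter
      ((isClosed_coneM M hs).preimage hptcont)
  have hSne : S.Nonempty := ⟨0, hS0⟩
  have hSbdd : BddAbove S := ⟨1, fun u hu => hSb u hu⟩
  set u' : ℝ := sSup S with hu'_def
  have hu'S : u' ∈ S := hSclosed.csSup_mem hSne hSbdd
  have hu'0 : 0 ≤ u' := hu'S.1
  have hu'lt1 : u' < 1 := by
    refine lt_of_le_of_ne (csSup_le hSne hSb) (fun h => hxC ?_)
    rw [← hpt1, ← h]
    exact hu'S.2
  set y : Fin m → ℝ := pt u' with hy_def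
  have hyC : y ∈ coneM M := hu'S.2
  have hyL : y ∈ LL s := hptL u'
  have hyP : (⟨y, hyL⟩ : ↥(LL s)) ∈ P := hyC
  -- y is not an interior point
  have hyO : (⟨y, hyL⟩ : ↥(LL s)) ∉ interior P := by
    intro hcontra
    obtain ⟨δ, hδ, hballP⟩ := Metric.mem_nhds_iff.1 (mem_interior_iff_mem_nhds.1 hcontra)
    set u₂ : ℝ := u' + δ / (‖x - c‖ + 1) with hu₂_def
    have hnorm_pos : (0:ℝ) < ‖x - c‖ + 1 := by positivity
    have hu₂gt : u' < u₂ := by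
      rw [hu₂_def]; nlinarith [div_pos hδ hnorm_pos]
    have hdiff : pt u₂ - y = (u₂ - u') • (x - c) := by
      simp only [hpt_def, hy_def]
      module
    have hmem : (⟨pt u₂, hptL u₂⟩ : ↥(LL s)) ∈ Metric.ball (⟨y, hyL⟩ : ↥(LL s)) δ := by
      rw [Metric.mem_ball, Subtype.dist_eq, dist_eq_norm, hdiff, norm_smul]
      have h1 : |u₂ - u'| = δ / (‖x - c‖ + 1) := by
        rw [hu₂_def, add_sub_cancel_left, abs_of_pos (div_pos hδ hnorm_pos)]
      rw [Real.norm_eq_abs, h1]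
      rw [div_mul_eq_mul_div, div_lt_iff₀ hnorm_pos]
      nlinarith [norm_nonneg (x - c), hδ]
    have : u₂ ∈ S := ⟨add_nonneg hu'0 (div_pos hδ hnorm_pos).le, hballP hmem⟩
    exact absurd (le_csSup hSbdd this) (not_le.2 hu₂gt)
  -- separating functional
  obtain ⟨f, hf⟩ := geometric_hahn_banach_open_point (hPconv.interior) isOpen_interior hyO
  have hle : ∀ z ∈ P, f z ≤ f (⟨y, hyL⟩ : ↥(LL s)) := by
    intro z hz
    have hcomb : ∀ a : ℝ, a ∈ Set.Ioo (0:ℝ) 1 →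
        f (a • csub + (1 - a) • z) < f (⟨y, hyL⟩ : ↥(LL s)) := fun a ha =>
      hf _ (hPconv.combo_interior_self_mem_interior hcO hz ha.1 (by linarith [ha.2.le]) (by ring))
    have hcont : Filter.Tendsto (fun a : ℝ => f (a • csub + (1 - a) • z))
        (nhdsWithin 0 (Set.Ioi 0)) (nhds (f z)) := by
      have hc2 : Continuous (fun a : ℝ => f (a • csub + (1 - a) • z)) := by fun_prop
      have h0 : f ((0:ℝ) • csub + (1 - (0:ℝ)) • z) = f z := by norm_num
      have := (hc2.tendsto 0).mono_left (nhdsWithin_le_nhds (s := Set.Ioi (0:ℝ)))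
      rwa [h0] at this
    refine le_of_tendsto hcont ?_
    filter_upwards [Ioo_mem_nhdsGT_of_mem (Set.mem_Ico.2 ⟨le_rfl, one_pos⟩)] with a ha
    exact (hcomb a ha).le
  have h0P : (0 : ↥(LL s)) ∈ P := by
    show ((0 : ↥(LL s)) : Fin m → ℝ) ∈ coneM M
    rw [Submodule.coe_zero]
    exact coneM_zero M
  have hy_nonneg : 0 ≤ f (⟨y, hyL⟩ : ↥(LL s)) := by
    have := hle 0 h0P
    rwa [map_zero] at this
  have hf0 : ∀ z ∈ P, f z ≤ 0 := by
    intro z hz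
    by_contra hfz
    push_neg at hfz
    set τ : ℝ := (f (⟨y, hyL⟩ : ↥(LL s)) + 1) / f z with hτ_def
    have hτpos : 0 < τ := by positivity
    have hτz : τ • z ∈ P := by
      show ((τ • z : ↥(LL s)) : Fin m → ℝ) ∈ coneM M
      rw [Submodule.coe_smul]
      exact coneM_smul M hτpos.le hz
    have := hle _ hτz
    rw [map_smul, smul_eq_mul, hτ_def, div_mul_cancel₀ _ (ne_of_gt hfz)] at this
    linarith
  have hfy0 : f (⟨y, hyL⟩ : ↥(LL s)) = 0 := le_antisymm (hf0 _ hyP) hy_nonneg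
  have hfc : f csub < 0 := by rw [← hfy0]; exact hf csub hcO
  -- build the supporting linear form on the ambient space
  obtain ⟨Q, hQ⟩ := Submodule.exists_isCompl (LL s)
  set π := (LL s).linearProjOfIsCompl Q hQ with hπ_def
  set γ : (Fin m → ℝ) →ₗ[ℝ] ℝ := -((f : ↥(LL s) →ₗ[ℝ] ℝ).comp π) with hγ_def
  have hπw : ∀ w (hw : w ∈ LL s), π w = ⟨w, hw⟩ := fun w hw =>
    Submodule.linearProjOfIsCompl_apply_left hQ ⟨w, hw⟩
  have hγval : ∀ w (hw : w ∈ LL s), γ w = -(f ⟨w, hw⟩) := by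
    intro w hw
    rw [hγ_def]
    simp only [LinearMap.neg_apply, LinearMap.comp_apply]
    rw [hπw w hw]
    rfl
  have hγC : ∀ w ∈ coneM M, 0 ≤ γ w := by
    intro w hw
    have hwL : w ∈ LL s := coneM_subset_LL M hs hw
    rw [hγval w hwL]
    have : f ⟨w, hwL⟩ ≤ 0 := hf0 _ hw
    linarith
  set H : Set (Fin m → ℝ) := {w ∈ coneM M | γ w = 0} with hH_def
  have hHface : IsFace M H := Or.inr ⟨γ, hγC, rfl⟩
  have hyH : y ∈ H := ⟨hyC, by rw [hγval y hyL, hfy0, neg_zero]⟩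
  have hHne : H ≠ coneM M := by
    intro heq
    have hcH : c ∈ H := heq ▸ hcC
    have := hcH.2
    rw [hγval c hcL, ← hcsub_def] at this
    linarith
  obtain ⟨G, hGfacet, hHG⟩ := facet_of_proper M hs hHface hHne
  obtain ⟨j, rfl⟩ := (hfacets G).1 hGfacet
  have hFjC : F j ≠ coneM M := ((hfacets (F j)).2 ⟨j, rfl⟩).2.1
  have hαjy : α j y = 0 := by
    have := hHG hyH
    rw [hFdef j] at this
    exact this.2
  have hsumc : α j c = ∑ g ∈ s, α j (toR g) := by rw [hc_def, map_sum]
  have hαjc : 0 < α j c := by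
    have hge : 0 ≤ α j c := by
      rw [hsumc]; exact Finset.sum_nonneg fun g hg => hα j _ (hgC g hg)
    rcases lt_or_eq_of_le hge with h | h
    · exact h
    · exfalso
      apply hFjC
      have hallzero : ∀ g ∈ s, α j (toR g) = 0 :=
        (Finset.sum_eq_zero_iff_of_nonneg
          (fun g hg => hα j _ (hgC g hg))).1 (by rw [← hsumc, ← h])
      apply Set.eq_of_subset_of_subset
      · rw [hFdef j]; exact Set.sep_subset _ _
      · intro w hw
        rw [hFdef j]
        refine ⟨hw, ?_⟩
        rw [coneM_eq_K M hs] at hw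
        obtain ⟨cc, hcc, rfl⟩ := hw
        rw [map_sum, Finset.sum_eq_zero]
        intro g hg
        rw [map_smul, hallzero g hg]
        simp
  have hexpand : α j y = (1 - u') * α j c + u' * α j x := by
    rw [hy_def, hpt_def]
    simp [map_add, map_smul]
  nlinarith [hxα j, mul_nonneg hu'0 (hxα j), mul_pos (by linarith : (0:ℝ) < 1 - u') hαjc]

theorem mem_relint {G : Set (Fin m → ℝ)} {x : Fin m → ℝ} (hx : x ∈ G) {ε : ℝ} (hε : 0 < ε)
    (h : ∀ y ∈ affineSpan ℝ G, dist y x < ε → y ∈ G) : x ∈ intrinsicInterior ℝ G := by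
  refine ⟨⟨x, subset_affineSpan ℝ G hx⟩, ?_, rfl⟩
  rw [mem_interior]
  refine ⟨((↑) : ↥(affineSpan ℝ G) → (Fin m → ℝ)) ⁻¹' Metric.ball x ε, ?_,
    Metric.isOpen_ball.preimage continuous_subtype_val,
    by simpa using Metric.mem_ball_self (x := x) hε⟩
  rintro ⟨y, hy⟩ hball
  exact h y hy (by simpa [Metric.mem_ball] using hball)

theorem relint_segment {G : Set (Fin m → ℝ)} {x : Fin m → ℝ}
    (hx : x ∈ intrinsicInterior ℝ G) {y : Fin m → ℝ} (hy : y ∈ G) :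
    ∃ u : ℝ, 0 < u ∧ x + u • (x - y) ∈ G := by
  have hxG : x ∈ G := intrinsicInterior_subset hx
  have hxs : x ∈ affineSpan ℝ G := subset_affineSpan ℝ G hxG
  have hys : y ∈ affineSpan ℝ G := subset_affineSpan ℝ G hy
  have pmem : ∀ u : ℝ, x + u • (x - y) ∈ affineSpan ℝ G := by
    intro u
    have := AffineSubspace.smul_vsub_vadd_mem (affineSpan ℝ G) u hxs hys hxs
    simpa [vsub_eq_sub, vadd_eq_add, add_comm] using this
  set p : ℝ → ↥(affineSpan ℝ G) := fun u => ⟨x + u • (x - y), pmem u⟩ with hp_def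
  have hcont : Continuous p := by
    apply Continuous.subtype_mk
    fun_prop
  obtain ⟨X, hXint, hXx⟩ := hx
  have hp0 : p 0 = X := Subtype.ext (by simp [hp_def, hXx])
  have hopen : IsOpen (p ⁻¹' interior ((↑) ⁻¹' G : Set (affineSpan ℝ G))) :=
    isOpen_interior.preimage hcont
  have h0mem : (0:ℝ) ∈ p ⁻¹' interior ((↑) ⁻¹' G : Set (affineSpan ℝ G)) := by
    simp only [Set.mem_preimage, hp0]
    exact hXint
  obtain ⟨δ, hδ, hball⟩ := Metric.isOpen_iff.1 hopen 0 h0mem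
  have hmem : (δ/2 : ℝ) ∈ Metric.ball (0:ℝ) δ := by
    rw [Metric.mem_ball, Real.dist_eq]
    rw [abs_of_pos (by linarith)]
    linarith
  have := interior_subset (hball hmem)
  exact ⟨δ/2, by linarith, this⟩

theorem pos_on_relint {G : Set (Fin m → ℝ)} (hG : IsFace M G)
    (β : (Fin m → ℝ) →ₗ[ℝ] ℝ) (hβ : ∀ w ∈ coneM M, 0 ≤ β w)
    (hnot : ¬ G ⊆ {w ∈ coneM M | β w = 0})
    {x : Fin m → ℝ} (hx : x ∈ intrinsicInterior ℝ G) : 0 < β x := by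
  have hxG : x ∈ G := intrinsicInterior_subset hx
  have hxC : x ∈ coneM M := face_subset M hG hxG
  rcases lt_or_eq_of_le (hβ x hxC) with h | h
  · exact h
  exfalso
  apply hnot
  intro y hy
  have hyC : y ∈ coneM M := face_subset M hG hy
  refine ⟨hyC, ?_⟩
  obtain ⟨u, hu, hz⟩ := relint_segment hx hy
  have hzC : x + u • (x - y) ∈ coneM M := face_subset M hG hz
  have hβz : β (x + u • (x - y)) = -(u * β y) := by
    rw [map_add, map_smul, map_sub, ← h]
    simp [smul_eq_mul]
  have h1 : 0 ≤ -(u * β y) := hβz ▸ hβ _ hzC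
  have h2 : 0 ≤ β y := hβ y hyC
  nlinarith

theorem sum_face_eq {t : ℕ} (α : Fin t → ((Fin m → ℝ) →ₗ[ℝ] ℝ))
    (hα : ∀ i, ∀ x ∈ coneM M, 0 ≤ α i x) (S : Finset (Fin t)) :
    {z ∈ coneM M | (∑ i ∈ S, α i) z = 0} = {z ∈ coneM M | ∀ i ∈ S, α i z = 0} := by
  ext z
  simp only [Set.mem_setOf_eq, LinearMap.coe_sum, Finset.sum_apply]
  constructor
  · rintro ⟨hzC, hsum⟩
    exact ⟨hzC, fun i hi => (Finset.sum_eq_zero_iff_of_nonneg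
      (fun i _ => hα i z hzC)).1 hsum i hi⟩
  · rintro ⟨hzC, hz⟩
    exact ⟨hzC, Finset.sum_eq_zero hz⟩

theorem mem_relint_face {s : Finset (Fin m → ℤ)}
    (hs : AddSubmonoid.closure (s : Set (Fin m → ℤ)) = M)
    {t : ℕ} (F : Fin t → Set (Fin m → ℝ)) (α : Fin t → ((Fin m → ℝ) →ₗ[ℝ] ℝ))
    (hα : ∀ i, ∀ x ∈ coneM M, 0 ≤ α i x)
    (hFdef : ∀ i, F i = {x ∈ coneM M | α i x = 0})
    (hfacets : ∀ G : Set (Fin m → ℝ), IsFacet M G ↔ ∃ i, G = F i)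
    (S : Finset (Fin t)) {x : Fin m → ℝ} (hxL : x ∈ LL s)
    (hzero : ∀ i ∈ S, α i x = 0) (hpos : ∀ i ∉ S, 0 < α i x) :
    x ∈ intrinsicInterior ℝ {z ∈ coneM M | ∀ i ∈ S, α i z = 0} := by
  classical
  set G : Set (Fin m → ℝ) := {z ∈ coneM M | ∀ i ∈ S, α i z = 0} with hG_def
  have hxα : ∀ i, 0 ≤ α i x := by
    intro i
    by_cases hi : i ∈ S
    · exact (hzero i hi).ge
    · exact (hpos i hi).le
  have hxC : x ∈ coneM M := farkas M hs F α hα hFdef hfacets hxL hxα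
  have hxG : x ∈ G := ⟨hxC, hzero⟩
  -- open set of positivity
  set U : Set (Fin m → ℝ) := ⋂ i ∈ Sᶜ, (α i) ⁻¹' (Set.Ioi 0) with hU_def
  have hUopen : IsOpen U := by
    apply isOpen_biInter_finset
    intro i _
    exact IsOpen.preimage (α i).continuous_of_finiteDimensional isOpen_Ioi
  have hxU : x ∈ U := by
    simp only [hU_def, Set.mem_iInter]
    intro i hi
    exact hpos i (by simpa using hi)
  obtain ⟨ε, hε, hball⟩ := Metric.isOpen_iff.1 hUopen x hxU
  -- the containing subspace
  set W : Submodule ℝ (Fin m → ℝ) := LL s ⊓ ⨅ i ∈ S, LinearMap.ker (α i) with hW_def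
  have hGW : G ⊆ (W : Set (Fin m → ℝ)) := by
    rintro z ⟨hzC, hz⟩
    rw [hW_def]
    refine Submodule.mem_inf.2 ⟨coneM_subset_LL M hs hzC, ?_⟩
    rw [Submodule.mem_iInf]
    intro i
    rw [Submodule.mem_iInf]
    intro hi
    exact hz i hi
  have hspan : (affineSpan ℝ G : Set (Fin m → ℝ)) ⊆ (W : Set (Fin m → ℝ)) := by
    have : affineSpan ℝ G ≤ W.toAffineSubspace := by
      rw [affineSpan_le]
      exact hGW
    intro z hz
    exact Submodule.mem_toAffineSubspace.1 (this hz)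
  refine mem_relint hxG hε ?_
  intro y hy hdist
  have hyW : y ∈ W := hspan hy
  have hyL : y ∈ LL s := (Submodule.mem_inf.1 (hW_def ▸ hyW)).1
  have hyker : ∀ i ∈ S, α i y = 0 := by
    have h2 := (Submodule.mem_inf.1 (hW_def ▸ hyW)).2
    intro i hi
    rw [Submodule.mem_iInf] at h2
    have := h2 i
    rw [Submodule.mem_iInf] at this
    exact this hi
  have hyU : y ∈ U := hball (by rwa [Metric.mem_ball])
  have hypos : ∀ i ∉ S, 0 < α i y := by
    intro i hi
    have := Set.mem_iInter.1 (hU_def ▸ hyU) i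
    rw [Set.mem_iInter] at this
    exact this (by simpa using hi)
  have hyα : ∀ i, 0 ≤ α i y := by
    intro i
    by_cases hi : i ∈ S
    · exact (hyker i hi).ge
    · exact (hypos i hi).le
  exact ⟨farkas M hs F α hα hFdef hfacets hyL hyα, hyker⟩

end Aux

open Aux in
/-- If `gp(M) ∩ relint(cone(M)) ⊆ M`, then
`M' = ⋃_F (⋂_{F ⊆ F_i} gp(M ∩ F_i)) ∩ relint(F)`, the union over all faces
`F` of `cone(M)` (with the empty intersection equal to `gp(M)`). -/
theorem primeM_eq_union_faces {m : ℕ} (M : AddSubmonoid (Fin m → ℤ)) (hFG : M.FG)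
    (t : ℕ) (F : Fin t → Set (Fin m → ℝ)) (α : Fin t → ((Fin m → ℝ) →ₗ[ℝ] ℝ))
    (hα : ∀ i, ∀ x ∈ coneM M, 0 ≤ α i x)
    (hFdef : ∀ i, F i = {x ∈ coneM M | α i x = 0})
    (hfacets : ∀ G : Set (Fin m → ℝ), IsFacet M G ↔ ∃ i, G = F i)
    (hrel : ∀ z ∈ gp M, toR z ∈ intrinsicInterior ℝ (coneM M) → z ∈ M) :
    {a : Fin m → ℤ | a ∈ gp M ∧ ∀ i, ∃ b, b ∈ M ∧ toR b ∈ F i ∧ a + b ∈ M} =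
      {a : Fin m → ℤ | ∃ G : Set (Fin m → ℝ), IsFace M G ∧ a ∈ gp M ∧
        (∀ i, G ⊆ F i → a ∈ gpF M (F i)) ∧ toR a ∈ intrinsicInterior ℝ G} := by
  classical
  obtain ⟨s, hs⟩ := hFG
  -- basic facts about the sets M ∩ F i
  have hPi0 : ∀ i, (0 : Fin m → ℤ) ∈ {a : Fin m → ℤ | a ∈ M ∧ toR a ∈ F i} := by
    intro i
    refine ⟨M.zero_mem, ?_⟩
    rw [toR_zero, hFdef i]
    exact ⟨coneM_zero M, map_zero _⟩
  have hPiadd : ∀ i, ∀ x ∈ {a : Fin m → ℤ | a ∈ M ∧ toR a ∈ F i},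
      ∀ y ∈ {a : Fin m → ℤ | a ∈ M ∧ toR a ∈ F i},
      x + y ∈ {a : Fin m → ℤ | a ∈ M ∧ toR a ∈ F i} := by
    intro i x hx y hy
    refine ⟨M.add_mem hx.1 hy.1, ?_⟩
    rw [toR_add, hFdef i]
    have hx2 := hFdef i ▸ hx.2
    have hy2 := hFdef i ▸ hy.2
    exact ⟨coneM_add M hx2.1 hy2.1, by rw [map_add, hx2.2, hy2.2, add_zero]⟩
  ext a
  simp only [Set.mem_setOf_eq]
  constructor
  · rintro ⟨haGp, hloc⟩
    have haL : toR a ∈ LL s := toR_mem_LL_of_gp M hs haGp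
    have hα0 : ∀ i, 0 ≤ α i (toR a) := by
      intro i
      obtain ⟨b, hbM, hbF, habM⟩ := hloc i
      have h1 : α i (toR (a + b)) = α i (toR a) + α i (toR b) := by rw [toR_add, map_add]
      have h2 : α i (toR b) = 0 := (hFdef i ▸ hbF).2
      have h3 : 0 ≤ α i (toR (a + b)) := hα i _ (mem_coneM M habM)
      linarith
    set S : Finset (Fin t) := Finset.univ.filter (fun i => α i (toR a) = 0) with hS_def
    set G : Set (Fin m → ℝ) := {z ∈ coneM M | ∀ i ∈ S, α i z = 0} with hG_def
    have hface : IsFace M G := by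
      refine Or.inr ⟨∑ i ∈ S, α i, fun x hx => ?_, (sum_face_eq M α hα S).symm⟩
      simp only [LinearMap.coe_sum, Finset.sum_apply]
      exact Finset.sum_nonneg fun i _ => hα i x hx
    have hrelint : toR a ∈ intrinsicInterior ℝ G :=
      mem_relint_face M hs F α hα hFdef hfacets S haL
        (fun i hi => (Finset.mem_filter.1 hi).2)
        (fun i hi => lt_of_le_of_ne (hα0 i)
          (fun h => hi (Finset.mem_filter.2 ⟨Finset.mem_univ i, h.symm⟩)))
    refine ⟨G, hface, haGp, ?_, hrelint⟩
    intro i hGF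
    have hxF : toR a ∈ F i := hGF (intrinsicInterior_subset hrelint)
    have hαa : α i (toR a) = 0 := (hFdef i ▸ hxF).2
    obtain ⟨b, hbM, hbF, habM⟩ := hloc i
    have hbα : α i (toR b) = 0 := (hFdef i ▸ hbF).2
    have habF : toR (a + b) ∈ F i := by
      rw [hFdef i]
      exact ⟨mem_coneM M habM, by rw [toR_add, map_add, hαa, hbα, add_zero]⟩
    have h1 : a + b ∈ gpF M (F i) := by
      apply AddSubgroup.subset_closure
      exact ⟨habM, habF⟩
    have h2 : b ∈ gpF M (F i) := by
      apply AddSubgroup.subset_closure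
      exact ⟨hbM, hbF⟩
    simpa using sub_mem h1 h2
  · rintro ⟨G, hGface, haGp, hgpF, hrelint⟩
    refine ⟨haGp, fun i => ?_⟩
    by_cases hGF : G ⊆ F i
    · obtain ⟨u, hu, v, hv, ha⟩ :=
        (mem_group_closure_iff (hPi0 i) (hPiadd i)).1 (hgpF i hGF)
      refine ⟨v, hv.1, hv.2, ?_⟩
      rw [ha, sub_add_cancel]
      exact hu.1
    · have hxC : toR a ∈ coneM M := face_subset M hGface (intrinsicInterior_subset hrelint)
      have hαpos : 0 < α i (toR a) := by
        apply pos_on_relint M hGface (α i) (hα i) ?_ hrelint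
        rw [← hFdef i]
        exact hGF
      set b : Fin m → ℤ := ∑ g ∈ s.filter (fun g => toR g ∈ F i), g with hb_def
      have hbM : b ∈ M :=
        AddSubmonoid.sum_mem M fun g hg => by
          rw [← hs]
          exact AddSubmonoid.subset_closure (Finset.mem_of_mem_filter g hg)
      have hbtoR : toR b = ∑ g ∈ s.filter (fun g => toR g ∈ F i), toR g :=
        toR_sum _ id
      have hbC : toR b ∈ coneM M := mem_coneM M hbM
      have hbαi : α i (toR b) = 0 := by
        rw [hbtoR, map_sum, Finset.sum_eq_zero]
        intro g hg
        exact (hFdef i ▸ (Finset.mem_filter.1 hg).2).2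
      have hbF : toR b ∈ F i := by
        rw [hFdef i]
        exact ⟨hbC, hbαi⟩
      have hbpos : ∀ j, α j (toR a) = 0 → 0 < α j (toR b) := by
        intro j hj
        have hGFj : G ⊆ F j := by
          by_contra hnot
          have := pos_on_relint M hGface (α j) (hα j) (by rw [← hFdef j]; exact hnot) hrelint
          rw [hj] at this
          exact lt_irrefl 0 this
        rcases lt_or_eq_of_le (hα j _ hbC) with h | h
        · exact h
        · exfalso
          have hterms : ∀ g ∈ s.filter (fun g => toR g ∈ F i), α j (toR g) = 0 := by
            apply (Finset.sum_eq_zero_iff_of_nonneg ?_).1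
            · rw [← map_sum, ← hbtoR, ← h]
            · intro g hg
              exact hα j _ (mem_coneM M (by
                rw [← hs]
                exact AddSubmonoid.subset_closure (Finset.mem_of_mem_filter g hg)))
          have hfci : IsFacet M (F i) := (hfacets (F i)).2 ⟨i, rfl⟩
          have hfcj : IsFacet M (F j) := (hfacets (F j)).2 ⟨j, rfl⟩
          have hTsub : F i ⊆ F j := by
            rw [face_rep M hs hfci.1 (fun g => toR g ∈ F i) (fun g => Iff.rfl),
              face_rep M hs hfcj.1 (fun g => toR g ∈ F j) (fun g => Iff.rfl)]
            apply K_mono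
            intro g hg
            rw [Finset.mem_filter]
            refine ⟨Finset.mem_of_mem_filter g hg, ?_⟩
            rw [hFdef j]
            exact ⟨mem_coneM M (by
              rw [← hs]
              exact AddSubmonoid.subset_closure (Finset.mem_of_mem_filter g hg)),
              hterms g hg⟩
          rcases hfci.2.2 (F j) hfcj.1 hTsub with heq | heq
          · exact hGF (heq ▸ hGFj)
          · exact hfcj.2.1 heq
      refine ⟨b, hbM, hbF, ?_⟩
      apply hrel _ (AddSubgroup.add_mem _ haGp (AddSubgroup.subset_closure hbM))
      have hC_eq : coneM M = {z ∈ coneM M | ∀ i ∈ (∅ : Finset (Fin t)), α i z = 0} := by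
        ext z; simp
      rw [hC_eq]
      refine mem_relint_face M hs F α hα hFdef hfacets ∅ ?_ (by simp) ?_
      · rw [toR_add]
        exact Submodule.add_mem _ (toR_mem_LL_of_gp M hs haGp) (toR_mem_LL_of_memM M hs hbM)
      · intro j _
        rw [toR_add, map_add]
        by_cases hj : α j (toR a) = 0
        · have := hbpos j hj
          linarith
        · have h1 := lt_of_le_of_ne (hα j _ hxC) (Ne.symm hj)
          have h2 := hα j _ hbC
          linarith
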